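/- Let n be odd and let Z ⊆ {0,1}^n be a code. Let Z^ex ⊆ {0,1}^{n+1} be the extended code obtained by appending to every z = (z_1,…,z_n) ∈ Z the parity bit z_{n+1} = z_1 ⊕ ⋯ ⊕ z_n. Then D^{L2}(Z^ex) = 2·D^{L2}(Z) + (1/2^{n+1})·C(2n,n). -/

import Mathlib

/-- The quadratic discrepancy of a code `Z ⊆ {0,1}^m`. -/
noncomputable def disc (m : ℕ) (Z : Finset (Fin m → Bool)) : ℝ :=
  ∑ t ∈ Finset.range (m + 1), ∑ x : Fin m → Bool,
    ((Z.card : ℝ)⁻¹ * ((Z.filter (fun z => hammingDist x z ≤ t)).card : ℝ)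
      - ((2 : ℝ) ^ m)⁻¹ *
          ((Finset.univ.filter (fun z : Fin m → Bool => hammingDist x z ≤ t)).card : ℝ)) ^ 2

/-- Extend a binary word by its parity bit `z_{n+1} = z_1 ⊕ ⋯ ⊕ z_n`. -/
def extendParity (n : ℕ) (z : Fin n → Bool) : Fin (n + 1) → Bool :=
  Fin.snoc z (decide ((Finset.univ.filter (fun i : Fin n => z i = true)).card % 2 = 1))

namespace DiscAux

open Finset

/-- real-valued (shifted) ball count -/
noncomputable def cA (m : ℕ) (W : Finset (Fin m → Bool)) (x : Fin m → Bool) (ε t : ℕ) : ℝ :=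
  ((W.filter fun z => hammingDist x z + ε ≤ t).card : ℝ)

def wt {m : ℕ} (x : Fin m → Bool) : ℕ := (univ.filter fun i => x i = true).card

lemma disc_eq (m : ℕ) (W : Finset (Fin m → Bool)) :
    disc m W = ∑ t ∈ Finset.range (m + 1), ∑ x : Fin m → Bool,
      ((W.card : ℝ)⁻¹ * cA m W x 0 t - ((2 : ℝ) ^ m)⁻¹ * cA m univ x 0 t) ^ 2 := by
  unfold disc cA
  simp only [add_zero]

lemma wt_add_wt {m : ℕ} (x z : Fin m → Bool) :
    wt x + wt z = 2 * (univ.filter fun i => x i = true ∧ z i = true).card + hammingDist x z := by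
  show _ = _ + (univ.filter fun i => x i ≠ z i).card
  simp only [wt, Finset.card_filter, Finset.mul_sum, ← Finset.sum_add_distrib]
  refine Finset.sum_congr rfl fun i _ => ?_
  cases hx : x i <;> cases hz : z i <;> simp [hx, hz]

lemma sphere_card {m : ℕ} (x : Fin m → Bool) (k : ℕ) :
    ((univ : Finset (Fin m → Bool)).filter fun z => hammingDist x z = k).card = m.choose k := by
  have h := Finset.card_powersetCard k (univ : Finset (Fin m))
  rw [Finset.card_univ, Fintype.card_fin] at h
  rw [← h]
  apply Finset.card_nbij' (fun z => univ.filter fun i => x i ≠ z i)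
      (fun S => fun i => if i ∈ S then !(x i) else x i)
  · intro z hz
    simp only [Finset.mem_coe, Finset.mem_filter] at hz
    simp only [Finset.mem_coe, Finset.mem_powersetCard_univ]
    exact hz.2
  · intro S hS
    simp only [Finset.mem_coe, Finset.mem_powersetCard_univ] at hS
    simp only [Finset.mem_coe, Finset.mem_filter]
    refine ⟨Finset.mem_univ _, ?_⟩
    show (univ.filter fun i => x i ≠ _).card = k
    rw [← hS]
    congr 1
    ext i
    by_cases hi : i ∈ S <;> simp [hi]
  · intro z hz
    funext i
    by_cases hi : x i = z i <;> simp [hi]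
    cases hzi : z i <;> cases hxi : x i <;> simp_all
  · intro S hS
    ext i
    by_cases hi : i ∈ S <;> simp [hi]

lemma hammingDist_snoc {m : ℕ} (x z : Fin m → Bool) (b c : Bool) :
    hammingDist (Fin.snoc x b : Fin (m+1) → Bool) (Fin.snoc z c)
      = hammingDist x z + if b = c then 0 else 1 := by
  simp only [hammingDist, Finset.card_filter]
  rw [Fin.sum_univ_castSucc]
  simp [Fin.snoc_castSucc, Fin.snoc_last, ite_not]

lemma dist_ext_iff {m : ℕ} (x z : Fin m → Bool) (b : Bool) (t : ℕ) :
    hammingDist (Fin.snoc x b : Fin (m+1) → Bool) (extendParity m z) ≤ t ↔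
      hammingDist x z + ((cond b 1 0) + wt x + t) % 2 ≤ t := by
  have hp := wt_add_wt x z
  rw [extendParity, hammingDist_snoc]
  have h1 : (decide ((univ.filter fun i : Fin m => z i = true).card % 2 = 1))
      = decide (wt z % 2 = 1) := rfl
  rw [h1]
  have h2 : ∀ c : Bool, ((c = decide (wt z % 2 = 1)) ↔ wt z % 2 = cond c 1 0) := by
    intro c; cases c <;> simp <;> omega
  by_cases h : b = decide (wt z % 2 = 1)
  · rw [if_pos h]
    rw [h2] at h
    cases b <;> simp only [cond_true, cond_false] at h ⊢ <;> omega
  · rw [if_neg h]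
    rw [h2] at h
    cases b <;> simp only [cond_true, cond_false] at h ⊢ <;> omega

lemma extendParity_injective {m : ℕ} : Function.Injective (extendParity m) := by
  intro a b h
  funext i
  have := congrFun h i.castSucc
  simpa [extendParity, Fin.snoc_castSucc] using this

/-- the snoc equivalence -/
def snocEquiv (m : ℕ) : (Fin m → Bool) × Bool ≃ (Fin (m+1) → Bool) where
  toFun p := Fin.snoc p.1 p.2
  invFun y := (fun i => y i.castSucc, y (Fin.last m))
  left_inv p := by simp [Fin.snoc_castSucc, Fin.snoc_last]
  right_inv y := Fin.snoc_init_self y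

lemma count_univ_indep {m : ℕ} (x y : Fin m → Bool) (p : ℕ → Prop) [DecidablePred p] :
    ((univ : Finset (Fin m → Bool)).filter fun z => p (hammingDist x z)).card
      = ((univ : Finset (Fin m → Bool)).filter fun z => p (hammingDist y z)).card := by
  have key : ∀ u v : Fin m → Bool, ∀ z : Fin m → Bool,
      hammingDist v (fun i => xor (z i) (xor (u i) (v i))) = hammingDist u z := by
    intro u v z
    simp only [hammingDist]
    congr 1
    ext i
    cases hx : u i <;> cases hy : v i <;> cases hz : z i <;> simp [hx, hy, hz]
  apply Finset.card_nbij' (fun z => fun i => xor (z i) (xor (x i) (y i)))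
      (fun z => fun i => xor (z i) (xor (y i) (x i)))
  · intro z hz
    simp only [Finset.mem_coe, Finset.mem_filter] at hz ⊢
    exact ⟨Finset.mem_univ _, by rw [key x y]; exact hz.2⟩
  · intro z hz
    simp only [Finset.mem_coe, Finset.mem_filter] at hz ⊢
    exact ⟨Finset.mem_univ _, by rw [key y x]; exact hz.2⟩
  · intro z _; funext i; cases hx : x i <;> cases hy : y i <;> cases hz : z i <;> simp [hx, hy, hz]
  · intro z _; funext i; cases hx : x i <;> cases hy : y i <;> cases hz : z i <;> simp [hx, hy, hz]

lemma cA_indep {m : ℕ} (x y : Fin m → Bool) (ε t : ℕ) :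
    cA m univ x ε t = cA m univ y ε t := by
  unfold cA
  rw [count_univ_indep x y (fun d => d + ε ≤ t)]

lemma sum_cA {m : ℕ} (W : Finset (Fin m → Bool)) (y : Fin m → Bool) (ε t : ℕ) :
    ∑ x : Fin m → Bool, cA m W x ε t = (W.card : ℝ) * cA m univ y ε t := by
  unfold cA
  rw [← Nat.cast_sum, ← Nat.cast_mul]
  congr 1
  simp only [Finset.card_filter]
  rw [Finset.sum_comm]
  have : ∀ z ∈ W, (∑ x : Fin m → Bool, if hammingDist x z + ε ≤ t then 1 else 0)
      = ((univ : Finset (Fin m → Bool)).filter fun w => hammingDist y w + ε ≤ t).card := by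
    intro z _
    rw [← Finset.card_filter]
    have e1 : ((univ : Finset (Fin m → Bool)).filter fun x => hammingDist x z + ε ≤ t).card
        = ((univ : Finset (Fin m → Bool)).filter fun x => hammingDist z x + ε ≤ t).card := by
      congr 1; ext x; simp [hammingDist_comm]
    rw [e1, count_univ_indep z y (fun d => d + ε ≤ t)]
  rw [Finset.sum_congr rfl this, Finset.sum_const, smul_eq_mul, Finset.card_filter]

lemma cA_split {m : ℕ} (x : Fin m → Bool) (t : ℕ) :
    cA m univ x 0 t = cA m univ x 1 t + (m.choose t : ℝ) := by
  unfold cA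
  rw [← Nat.cast_add]
  congr 1
  rw [← sphere_card x t, ← Finset.card_union_of_disjoint (by
      rw [Finset.disjoint_left]
      intro a ha hb
      rw [Finset.mem_filter] at ha hb
      omega)]
  congr 1
  rw [← Finset.filter_or]
  ext z
  simp only [Finset.mem_filter, Finset.mem_univ, true_and]
  omega

lemma cA_full {m : ℕ} (W : Finset (Fin m → Bool)) (x : Fin m → Bool) (t : ℕ) (ht : m ≤ t) :
    cA m W x 0 t = (W.card : ℝ) := by
  unfold cA
  congr 1
  rw [Finset.filter_true_of_mem]
  intro z _
  calc hammingDist x z + 0 ≤ Fintype.card (Fin m) := by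
        rw [add_zero]; exact hammingDist_le_card_fintype
    _ ≤ t := by rw [Fintype.card_fin]; exact ht

lemma cA_shift {m : ℕ} (W : Finset (Fin m → Bool)) (x : Fin m → Bool) (t : ℕ) :
    cA m W x 1 (t + 1) = cA m W x 0 t := by
  unfold cA
  congr 1
  congr 1
  apply Finset.filter_congr
  intro z _
  constructor <;> intro <;> omega

lemma cA_one_zero {m : ℕ} (W : Finset (Fin m → Bool)) (x : Fin m → Bool) :
    cA m W x 1 0 = 0 := by
  unfold cA
  norm_num [Finset.filter_false_of_mem]

lemma card_univ_fun (m : ℕ) :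
    ((univ : Finset (Fin m → Bool)).card : ℝ) = (2 : ℝ) ^ m := by
  rw [Finset.card_univ, Fintype.card_fun, Fintype.card_fin, Fintype.card_bool]
  push_cast
  ring

lemma count_ext {m : ℕ} (Z : Finset (Fin m → Bool)) (x : Fin m → Bool) (b : Bool) (t : ℕ) :
    cA (m+1) (Z.image (extendParity m)) (Fin.snoc x b) 0 t
      = cA m Z x ((cond b 1 0 + wt x + t) % 2) t := by
  unfold cA
  congr 1
  rw [Finset.filter_image, Finset.card_image_of_injective _ extendParity_injective]
  congr 1
  ext z
  simp only [Finset.mem_filter, add_zero, dist_ext_iff]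

lemma count_univ_succ {m : ℕ} (x : Fin m → Bool) (b : Bool) (t : ℕ) :
    cA (m+1) univ (Fin.snoc x b) 0 t = cA m univ x 0 t + cA m univ x 1 t := by
  unfold cA
  rw [← Nat.cast_add]
  congr 1
  simp only [add_zero]
  rw [Finset.card_filter]
  rw [← Fintype.sum_equiv (snocEquiv m)
      (fun p => if hammingDist (Fin.snoc x b : Fin (m+1) → Bool) (Fin.snoc p.1 p.2) ≤ t then 1 else 0)
      (fun z' => if hammingDist (Fin.snoc x b) z' ≤ t then 1 else 0) (fun p => rfl)]
  rw [Fintype.sum_prod_type]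
  have : ∀ z : Fin m → Bool,
      (∑ c : Bool, if hammingDist (Fin.snoc x b : Fin (m+1) → Bool) (Fin.snoc z c) ≤ t then 1 else 0)
      = (if hammingDist x z ≤ t then 1 else 0) + (if hammingDist x z + 1 ≤ t then 1 else 0) := by
    intro z
    rw [Fintype.sum_bool, hammingDist_snoc, hammingDist_snoc]
    cases b <;> simp [add_comm]
  rw [Finset.sum_congr rfl (fun z _ => this z), Finset.sum_add_distrib,
    ← Finset.card_filter, ← Finset.card_filter]

lemma sum_bool_parity (k : ℕ) (f : ℕ → ℝ) :
    (∑ b : Bool, f (((cond b 1 0) + k) % 2)) = f 0 + f 1 := by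
  rw [Fintype.sum_bool]
  simp only [cond_true, cond_false]
  rcases Nat.mod_two_eq_zero_or_one k with h | h
  · have h1 : (1 + k) % 2 = 1 := by omega
    have h0 : (0 + k) % 2 = 0 := by omega
    rw [h1, h0, add_comm]
  · have h1 : (1 + k) % 2 = 0 := by omega
    have h0 : (0 + k) % 2 = 1 := by omega
    rw [h1, h0]

lemma key_alg (a a' q δ : ℝ) :
    (a - ((q + δ) + q) / 2) ^ 2 + (a' - ((q + δ) + q) / 2) ^ 2
      = (a - (q + δ)) ^ 2 + (a' - q) ^ 2 + δ * (a - (q + δ)) - δ * (a' - q) + δ ^ 2 / 2 := by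
  ring

lemma sum_choose_sq (m : ℕ) :
    ∑ t ∈ range (m + 1), (m.choose t : ℝ) * (m.choose t : ℝ) = ((2 * m).choose m : ℝ) := by
  have h1 : ∀ t ∈ range (m + 1), (m.choose t : ℝ) * (m.choose t : ℝ)
      = ((m.choose t * m.choose t : ℕ) : ℝ) := by intros; push_cast; ring
  rw [Finset.sum_congr rfl h1, ← Nat.cast_sum]
  congr 1
  rw [two_mul, Nat.add_choose_eq m m m, Finset.Nat.sum_antidiagonal_eq_sum_range_succ_mk]
  refine Finset.sum_congr rfl fun k hk => ?_
  rw [Finset.mem_range] at hk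
  rw [Nat.choose_symm (by omega)]

end DiscAux

open Finset DiscAux

set_option maxHeartbeats 1000000 in
/-- For odd `n` and a code `Z ⊆ {0,1}^n`, the extended code `Z^ex ⊆ {0,1}^{n+1}` obtained by
appending the parity bit satisfies `D^{L2}(Z^ex) = 2·D^{L2}(Z) + (1/2^{n+1})·C(2n,n)`. -/
theorem discrepancy_extended_code (n : ℕ) (hn : Odd n)
    (Z : Finset (Fin n → Bool)) (hZ : Z.Nonempty) :
    disc (n + 1) (Z.image (extendParity n))
      = 2 * disc n Z + ((2 : ℝ) ^ (n + 1))⁻¹ * Nat.choose (2 * n) n := by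
  classical
  have hNe : (Z.image (extendParity n)).card = Z.card :=
    Finset.card_image_of_injective _ extendParity_injective
  have hN0 : ((Z.card : ℕ) : ℝ) ≠ 0 := Nat.cast_ne_zero.mpr (Finset.card_pos.mpr hZ).ne'
  have h2n : ((2:ℝ)^n) ≠ 0 := by positivity
  -- Step A: reindex the anchors of the extended cube by (x, b) ↦ snoc x b
  have stepA : ∀ t : ℕ,
      (∑ x' : Fin (n+1) → Bool,
        (((Z.image (extendParity n)).card : ℝ)⁻¹ * cA (n+1) (Z.image (extendParity n)) x' 0 t
          - ((2:ℝ)^(n+1))⁻¹ * cA (n+1) univ x' 0 t) ^ 2)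
      = ∑ x : Fin n → Bool, ∑ b : Bool,
        ((Z.card : ℝ)⁻¹ * cA n Z x ((cond b 1 0 + (wt x + t)) % 2) t
          - ((2:ℝ)^(n+1))⁻¹ * (cA n univ x 0 t + cA n univ x 1 t)) ^ 2 := by
    intro t
    have point : ∀ (x : Fin n → Bool) (b : Bool),
        (((Z.image (extendParity n)).card : ℝ)⁻¹
            * cA (n+1) (Z.image (extendParity n)) (Fin.snoc x b) 0 t
          - ((2:ℝ)^(n+1))⁻¹ * cA (n+1) univ (Fin.snoc x b) 0 t) ^ 2
        = ((Z.card : ℝ)⁻¹ * cA n Z x ((cond b 1 0 + (wt x + t)) % 2) t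
          - ((2:ℝ)^(n+1))⁻¹ * (cA n univ x 0 t + cA n univ x 1 t)) ^ 2 := by
      intro x b
      rw [hNe, count_ext, count_univ_succ, add_assoc]
    have he := Fintype.sum_equiv (snocEquiv n)
      (fun p : (Fin n → Bool) × Bool =>
        (((Z.card : ℝ))⁻¹ * cA n Z p.1 ((cond p.2 1 0 + (wt p.1 + t)) % 2) t
          - ((2:ℝ)^(n+1))⁻¹ * (cA n univ p.1 0 t + cA n univ p.1 1 t)) ^ 2)
      (fun x' : Fin (n+1) → Bool =>
        (((Z.image (extendParity n)).card : ℝ)⁻¹ * cA (n+1) (Z.image (extendParity n)) x' 0 t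
          - ((2:ℝ)^(n+1))⁻¹ * cA (n+1) univ x' 0 t) ^ 2)
      (fun p => (point p.1 p.2).symm)
    rw [← he, Fintype.sum_prod_type]
  -- Step B: sum over the two parity choices
  have stepB : ∀ (x : Fin n → Bool) (t : ℕ),
      (∑ b : Bool, ((Z.card : ℝ)⁻¹ * cA n Z x ((cond b 1 0 + (wt x + t)) % 2) t
          - ((2:ℝ)^(n+1))⁻¹ * (cA n univ x 0 t + cA n univ x 1 t)) ^ 2)
      = ((Z.card : ℝ)⁻¹ * cA n Z x 0 t
          - ((2:ℝ)^(n+1))⁻¹ * (cA n univ x 0 t + cA n univ x 1 t)) ^ 2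
        + ((Z.card : ℝ)⁻¹ * cA n Z x 1 t
          - ((2:ℝ)^(n+1))⁻¹ * (cA n univ x 0 t + cA n univ x 1 t)) ^ 2 :=
    fun x t => sum_bool_parity (wt x + t)
      (fun ε => ((Z.card : ℝ)⁻¹ * cA n Z x ε t
          - ((2:ℝ)^(n+1))⁻¹ * (cA n univ x 0 t + cA n univ x 1 t)) ^ 2)
  -- Step C: pointwise algebraic decomposition
  have stepC : ∀ (x : Fin n → Bool) (t : ℕ),
      ((Z.card : ℝ)⁻¹ * cA n Z x 0 t
          - ((2:ℝ)^(n+1))⁻¹ * (cA n univ x 0 t + cA n univ x 1 t)) ^ 2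
        + ((Z.card : ℝ)⁻¹ * cA n Z x 1 t
          - ((2:ℝ)^(n+1))⁻¹ * (cA n univ x 0 t + cA n univ x 1 t)) ^ 2
      = ((Z.card : ℝ)⁻¹ * cA n Z x 0 t - ((2:ℝ)^n)⁻¹ * cA n univ x 0 t) ^ 2
        + ((Z.card : ℝ)⁻¹ * cA n Z x 1 t - ((2:ℝ)^n)⁻¹ * cA n univ x 1 t) ^ 2
        + ((2:ℝ)^n)⁻¹ * (n.choose t : ℝ)
            * ((Z.card : ℝ)⁻¹ * cA n Z x 0 t - ((2:ℝ)^n)⁻¹ * cA n univ x 0 t)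
        - ((2:ℝ)^n)⁻¹ * (n.choose t : ℝ)
            * ((Z.card : ℝ)⁻¹ * cA n Z x 1 t - ((2:ℝ)^n)⁻¹ * cA n univ x 1 t)
        + (((2:ℝ)^n)⁻¹ * (n.choose t : ℝ)) ^ 2 / 2 := by
    intro x t
    rw [cA_split x t, pow_succ]
    ring
  have main : disc (n+1) (Z.image (extendParity n))
      = ∑ t ∈ range (n+1+1), ∑ x : Fin n → Bool,
        (((Z.card : ℝ)⁻¹ * cA n Z x 0 t - ((2:ℝ)^n)⁻¹ * cA n univ x 0 t) ^ 2
          + ((Z.card : ℝ)⁻¹ * cA n Z x 1 t - ((2:ℝ)^n)⁻¹ * cA n univ x 1 t) ^ 2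
          + ((2:ℝ)^n)⁻¹ * (n.choose t : ℝ)
              * ((Z.card : ℝ)⁻¹ * cA n Z x 0 t - ((2:ℝ)^n)⁻¹ * cA n univ x 0 t)
          - ((2:ℝ)^n)⁻¹ * (n.choose t : ℝ)
              * ((Z.card : ℝ)⁻¹ * cA n Z x 1 t - ((2:ℝ)^n)⁻¹ * cA n univ x 1 t)
          + (((2:ℝ)^n)⁻¹ * (n.choose t : ℝ)) ^ 2 / 2) := by
    rw [disc_eq]
    refine Finset.sum_congr rfl fun t _ => ?_
    rw [stepA t]
    refine Finset.sum_congr rfl fun x _ => ?_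
    rw [stepB x t]
    exact stepC x t
  have E1 : ∑ t ∈ range (n+1+1), ∑ x : Fin n → Bool,
      ((Z.card : ℝ)⁻¹ * cA n Z x 0 t - ((2:ℝ)^n)⁻¹ * cA n univ x 0 t) ^ 2 = disc n Z := by
    rw [Finset.sum_range_succ]
    have hlast : ∑ x : Fin n → Bool,
        ((Z.card : ℝ)⁻¹ * cA n Z x 0 (n+1) - ((2:ℝ)^n)⁻¹ * cA n univ x 0 (n+1)) ^ 2 = 0 := by
      apply Finset.sum_eq_zero
      intro x _
      rw [cA_full Z x (n+1) (by omega), cA_full univ x (n+1) (by omega), card_univ_fun,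
        inv_mul_cancel₀ hN0, inv_mul_cancel₀ h2n]
      ring
    rw [hlast, add_zero, disc_eq]
  have E2 : ∑ t ∈ range (n+1+1), ∑ x : Fin n → Bool,
      ((Z.card : ℝ)⁻¹ * cA n Z x 1 t - ((2:ℝ)^n)⁻¹ * cA n univ x 1 t) ^ 2 = disc n Z := by
    rw [Finset.sum_range_succ']
    have h0 : ∑ x : Fin n → Bool,
        ((Z.card : ℝ)⁻¹ * cA n Z x 1 0 - ((2:ℝ)^n)⁻¹ * cA n univ x 1 0) ^ 2 = 0 := by
      apply Finset.sum_eq_zero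
      intro x _
      rw [cA_one_zero, cA_one_zero]
      ring
    rw [h0, add_zero, disc_eq]
    refine Finset.sum_congr rfl fun t _ => Finset.sum_congr rfl fun x _ => ?_
    rw [cA_shift, cA_shift]
  have hsub : ∀ (ε : ℕ) (t : ℕ), ∑ x : Fin n → Bool,
      ((Z.card : ℝ)⁻¹ * cA n Z x ε t - ((2:ℝ)^n)⁻¹ * cA n univ x ε t) = 0 := by
    intro ε t
    rw [Finset.sum_sub_distrib, ← Finset.mul_sum, ← Finset.mul_sum,
      sum_cA Z (fun _ => false) ε t, sum_cA univ (fun _ => false) ε t, card_univ_fun]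
    rw [← mul_assoc, inv_mul_cancel₀ hN0, ← mul_assoc, inv_mul_cancel₀ h2n]
    ring
  have E3 : ∀ ε : ℕ, ∑ t ∈ range (n+1+1), ∑ x : Fin n → Bool,
      ((2:ℝ)^n)⁻¹ * (n.choose t : ℝ)
        * ((Z.card : ℝ)⁻¹ * cA n Z x ε t - ((2:ℝ)^n)⁻¹ * cA n univ x ε t) = 0 := by
    intro ε
    apply Finset.sum_eq_zero
    intro t _
    rw [← Finset.mul_sum, hsub ε t, mul_zero]
  have E5 : ∑ t ∈ range (n+1+1), ∑ x : Fin n → Bool,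
      (((2:ℝ)^n)⁻¹ * (n.choose t : ℝ)) ^ 2 / 2
      = ((2:ℝ)^(n+1))⁻¹ * ((2*n).choose n : ℝ) := by
    have hx : ∀ t : ℕ, ∑ _x : Fin n → Bool, (((2:ℝ)^n)⁻¹ * (n.choose t : ℝ)) ^ 2 / 2
        = ((2:ℝ)^(n+1))⁻¹ * ((n.choose t : ℝ) * (n.choose t : ℝ)) := by
      intro t
      rw [Finset.sum_const, Finset.card_univ, Fintype.card_fun, Fintype.card_fin,
        Fintype.card_bool, nsmul_eq_mul, pow_succ]
      push_cast
      field_simp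
      ring
    rw [Finset.sum_congr rfl fun t _ => hx t, ← Finset.mul_sum]
    congr 1
    rw [Finset.sum_range_succ, sum_choose_sq, Nat.choose_eq_zero_of_lt (Nat.lt_succ_self n)]
    norm_num
  rw [main]
  simp only [Finset.sum_add_distrib, Finset.sum_sub_distrib]
  rw [E1, E2, E3 0, E3 1, E5]
  push_cast
  ring
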